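/- Let x be fixed with |x| = r < R, and for ψ ∈ [0, π] let ω(ψ) = l(ψ)/q(ψ) where q(ψ) = |x−y|, l(ψ) = |x−y*| for y ∈ S^k(R) with ∠Oxy = ψ. Then dω/dψ = (l/q) · (4 r sin ψ)/(l + q). -/

import Mathlib

open Real

/-- Differentiation of `ω = l/q` with respect to `ψ`: with `0 < r < R` and the chord
distances `q(ψ) = r cos ψ + √(R² − r² sin² ψ)`, `l(ψ) = √(R² − r² sin² ψ) − r cos ψ`
from a point at distance `r` from the origin to the sphere of radius `R` along the
direction at angle `ψ`, the ratio `ω = l/q` satisfies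
`dω/dψ = (l/q) · 4 r sin ψ / (l+q)`. -/
theorem stmt9 (r R : ℝ) (hr : 0 < r) (hrR : r < R) :
    ∀ ψ ∈ Set.Ioo 0 π,
      let q : ℝ → ℝ := fun ψ => r * Real.cos ψ + Real.sqrt (R^2 - r^2 * Real.sin ψ^2)
      let l : ℝ → ℝ := fun ψ => Real.sqrt (R^2 - r^2 * Real.sin ψ^2) - r * Real.cos ψ
      HasDerivAt (fun ψ => l ψ / q ψ)
        (l ψ / q ψ * (4 * r * Real.sin ψ) / (l ψ + q ψ)) ψ := by
  intro ψ hψ q l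
  set s : ℝ := Real.sqrt (R^2 - r^2 * Real.sin ψ^2) with hs_def
  have hpos : (0:ℝ) < R^2 - r^2 * Real.sin ψ^2 := by
    nlinarith [Real.sin_sq_le_one ψ, sq_nonneg (Real.sin ψ), hr.le, hrR]
  have hs2 : s^2 = R^2 - r^2 * Real.sin ψ^2 := Real.sq_sqrt hpos.le
  have hspos : 0 < s := Real.sqrt_pos.mpr hpos
  have hcos : r^2 * Real.cos ψ^2 < s^2 := by
    rw [hs2]; nlinarith [Real.sin_sq_add_cos_sq ψ]
  have hq : 0 < q ψ := by
    show 0 < r * Real.cos ψ + s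
    nlinarith [abs_nonneg (Real.cos ψ), sq_abs (Real.cos ψ),
      neg_abs_le (Real.cos ψ), sq_nonneg (s - r * |Real.cos ψ|),
      mul_pos hr hspos]
  have hl : 0 < l ψ := by
    show 0 < s - r * Real.cos ψ
    nlinarith [le_abs_self (Real.cos ψ), sq_abs (Real.cos ψ),
      sq_nonneg (s - r * |Real.cos ψ|)]
  -- derivative of the inner function
  have hinner : HasDerivAt (fun t => R^2 - r^2 * Real.sin t^2)
      (-(r^2 * (2 * Real.sin ψ * Real.cos ψ))) ψ := by
    have h1 : HasDerivAt (fun t => Real.sin t ^ 2)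
        (2 * Real.sin ψ * Real.cos ψ) ψ := by
      have := (Real.hasDerivAt_sin ψ).fun_pow 2
      simpa [pow_one, mul_comm, mul_assoc, mul_left_comm] using this
    have := (h1.const_mul (r^2)).const_sub (R^2)
    simpa [mul_comm, mul_assoc, mul_left_comm] using this
  have hsqrt : HasDerivAt (fun t => Real.sqrt (R^2 - r^2 * Real.sin t^2))
      (-(r^2 * (2 * Real.sin ψ * Real.cos ψ)) / (2 * s)) ψ :=
    hinner.sqrt hpos.ne'
  have hcosd : HasDerivAt (fun t => r * Real.cos t) (r * (-Real.sin ψ)) ψ :=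
    (Real.hasDerivAt_cos ψ).const_mul r
  have hqd : HasDerivAt q (r * (-Real.sin ψ) + -(r^2 * (2 * Real.sin ψ * Real.cos ψ)) / (2 * s)) ψ :=
    hcosd.add hsqrt
  have hld : HasDerivAt l (-(r^2 * (2 * Real.sin ψ * Real.cos ψ)) / (2 * s) - r * (-Real.sin ψ)) ψ :=
    hsqrt.sub hcosd
  have hdiv : HasDerivAt (fun ψ => l ψ / q ψ) _ ψ := hld.div hqd hq.ne'
  convert hdiv using 1
  show l ψ / q ψ * (4 * r * Real.sin ψ) / (l ψ + q ψ) = _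
  have hql : l ψ = s - r * Real.cos ψ := rfl
  have hqq : q ψ = r * Real.cos ψ + s := rfl
  rw [hql, hqq]
  have hqne : r * Real.cos ψ + s ≠ 0 := by rw [← hqq]; exact hq.ne'
  have hlq : (s - r * Real.cos ψ) + (r * Real.cos ψ + s) = 2 * s := by ring
  have key : (s - r * Real.cos ψ) * (r * Real.cos ψ + s) = R^2 - r^2 := by
    linear_combination hs2 - r^2 * (Real.sin_sq_add_cos_sq ψ)
  have hsne : s ≠ 0 := hspos.ne'
  field_simp
  ring_nf
  have hss : s * s⁻¹ = 1 := mul_inv_cancel₀ hsne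
  linear_combination (-(r ^ 2 * Real.cos ψ ^ 2 * Real.sin ψ * 2) + s ^ 2 * Real.sin ψ * 2) * hss
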